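/- Let c > 0, P_{C,S} ≥ 0, λ_S, λ_D, P_D > 0. The function φ(P_S) = exp(-c/(P_S - P_{C,S})) · min(1, λ_S/P_S, λ_D/P_D), defined for P_S > P_{C,S}, is maximized at P_S* = max(λ_S, B_th, λ_S P_D/λ_D), where B_th = (1/2)[(2P_{C,S} + c) + c^{1/2}(4P_{C,S} + c)^{1/2}]. -/

import Mathlib

lemma uHasDeriv (c Pcs lamS : ℝ) {P : ℝ} (hP : Pcs < P) (hP0 : 0 < P) :
    HasDerivAt (fun x => Real.exp (-c / (x - Pcs)) * (lamS / x))
      (Real.exp (-c / (P - Pcs)) * lamS * (c * P - (P - Pcs) ^ 2) /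
        ((P - Pcs) ^ 2 * P ^ 2)) P := by
  have hne : P - Pcs ≠ 0 := ne_of_gt (sub_pos.2 hP)
  have h1 : HasDerivAt (fun x : ℝ => x - Pcs) 1 P := (hasDerivAt_id P).sub_const Pcs
  have h2 : HasDerivAt (fun x : ℝ => (x - Pcs)⁻¹) (-1 / (P - Pcs) ^ 2) P := by
    exact h1.inv hne
  have h3 : HasDerivAt (fun x : ℝ => -c / (x - Pcs)) (c / (P - Pcs) ^ 2) P := by
    have h := h2.const_mul (-c)
    simp only [div_eq_mul_inv]
    exact h.congr_deriv (by ring)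
  have h4 := h3.exp
  have h5 : HasDerivAt (fun x : ℝ => lamS / x) (lamS * (-(P ^ 2)⁻¹)) P := by
    have h := (hasDerivAt_inv (ne_of_gt hP0)).const_mul lamS
    simp only [div_eq_mul_inv]
    convert h using 1
  have h6 := h4.mul h5
  refine h6.congr_deriv ?_
  field_simp
  ring

theorem stmt13 (c Pcs lamS lamD PD : ℝ)
    (hc : 0 < c) (hPcs : 0 ≤ Pcs) (hlS : 0 < lamS) (hlD : 0 < lamD)
    (hPD : 0 < PD)
    (phi : ℝ → ℝ)
    (hphi : ∀ P : ℝ, Pcs < P → phi P = Real.exp (-c / (P - Pcs)) *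
      min (min 1 (lamS / P)) (lamD / PD))
    (Bth : ℝ)
    (hBth : Bth = ((2 * Pcs + c) + Real.sqrt c * Real.sqrt (4 * Pcs + c)) / 2) :
    Pcs < max (max lamS Bth) (lamS * PD / lamD) ∧
    ∀ P : ℝ, Pcs < P → phi P ≤ phi (max (max lamS Bth) (lamS * PD / lamD)) := by
  set s : ℝ := Real.sqrt c * Real.sqrt (4 * Pcs + c) with hs
  have hs0 : 0 ≤ s := mul_nonneg (Real.sqrt_nonneg _) (Real.sqrt_nonneg _)
  have hs2 : s ^ 2 = c * (4 * Pcs + c) := by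
    rw [hs, mul_pow, Real.sq_sqrt hc.le, Real.sq_sqrt (by linarith)]
  have hcs : c ≤ s := by nlinarith [mul_nonneg hc.le hPcs]
  have hBP : Pcs < Bth := by rw [hBth]; linarith
  set u : ℝ → ℝ := fun P => Real.exp (-c / (P - Pcs)) * (lamS / P) with hu
  have hpos : ∀ P : ℝ, Pcs < P → 0 < P := fun P h => lt_of_le_of_lt hPcs h
  -- factorization of the derivative numerator
  have key : ∀ x : ℝ, c * x - (x - Pcs) ^ 2
      = (Bth - x) * (x - (2 * Pcs + c - s) / 2) := by
    intro x
    rw [hBth]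
    linear_combination (-1/4 : ℝ) * hs2
  have hqpos : ∀ x : ℝ, Pcs < x → x ≤ Bth → 0 ≤ c * x - (x - Pcs) ^ 2 := by
    intro x h1 h2
    rw [key]
    apply mul_nonneg <;> linarith
  have hqneg : ∀ x : ℝ, Pcs < x → Bth ≤ x → c * x - (x - Pcs) ^ 2 ≤ 0 := by
    intro x h1 h2
    rw [key]
    apply mul_nonpos_of_nonpos_of_nonneg <;> linarith
  -- monotone up to Bth
  have humono : ∀ a b : ℝ, Pcs < a → a ≤ b → b ≤ Bth → u a ≤ u b := by
    intro a b ha hab hb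
    have hmono := monotoneOn_of_deriv_nonneg (convex_Icc a b)
      (f := u)
      (fun x hx => (uHasDeriv c Pcs lamS (lt_of_lt_of_le ha hx.1)
        (hpos x (lt_of_lt_of_le ha hx.1))).continuousAt.continuousWithinAt)
      (by
        rw [interior_Icc]
        intro x hx
        exact (uHasDeriv c Pcs lamS (lt_of_lt_of_le ha hx.1.le)
          (hpos x (lt_of_lt_of_le ha hx.1.le))).differentiableAt.differentiableWithinAt)
      (by
        rw [interior_Icc]
        intro x hx
        have hxP : Pcs < x := lt_of_lt_of_le ha hx.1.le
        rw [(uHasDeriv c Pcs lamS hxP (hpos x hxP)).deriv]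
        apply div_nonneg
        · exact mul_nonneg (mul_nonneg (Real.exp_pos _).le hlS.le)
            (hqpos x hxP (hx.2.le.trans hb))
        · positivity)
    exact hmono ⟨le_refl a, hab⟩ ⟨hab, le_refl b⟩ hab
  -- antitone after Bth
  have hanti : ∀ a b : ℝ, Bth ≤ a → a ≤ b → u b ≤ u a := by
    intro a b ha hab
    have haP : Pcs < a := lt_of_lt_of_le hBP ha
    have hA := antitoneOn_of_deriv_nonpos (convex_Icc a b)
      (f := u)
      (fun x hx => (uHasDeriv c Pcs lamS (lt_of_lt_of_le haP hx.1)
        (hpos x (lt_of_lt_of_le haP hx.1))).continuousAt.continuousWithinAt)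
      (by
        rw [interior_Icc]
        intro x hx
        exact (uHasDeriv c Pcs lamS (lt_of_lt_of_le haP hx.1.le)
          (hpos x (lt_of_lt_of_le haP hx.1.le))).differentiableAt.differentiableWithinAt)
      (by
        rw [interior_Icc]
        intro x hx
        have hxP : Pcs < x := lt_of_lt_of_le haP hx.1.le
        rw [(uHasDeriv c Pcs lamS hxP (hpos x hxP)).deriv]
        apply div_nonpos_of_nonpos_of_nonneg
        · exact mul_nonpos_of_nonneg_of_nonpos
            (mul_nonneg (Real.exp_pos _).le hlS.le)
            (hqneg x hxP (ha.trans hx.1.le))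
        · positivity)
    exact hA ⟨le_refl a, hab⟩ ⟨hab, le_refl b⟩ hab
  -- set up the maximizer
  have hmaxeq : max (max lamS Bth) (lamS * PD / lamD)
      = max (max lamS (lamS * PD / lamD)) Bth := by
    rw [max_assoc, max_comm Bth, ← max_assoc]
  set M : ℝ := max lamS (lamS * PD / lamD) with hMdef
  set Pst : ℝ := max M Bth with hPstdef
  rw [hmaxeq]
  have hlSM : lamS ≤ M := le_max_left _ _
  have hM0 : 0 < M := lt_of_lt_of_le hlS hlSM
  have hPstB : Bth ≤ Pst := le_max_right _ _
  have hPstP : Pcs < Pst := lt_of_lt_of_le hBP hPstB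
  have hPst0 : 0 < Pst := hpos _ hPstP
  -- m0 = lamS / M
  have hm0M : min 1 (lamD / PD) = lamS / M := by
    rcases le_total lamS (lamS * PD / lamD) with h | h
    · have hMeq : M = lamS * PD / lamD := max_eq_right h
      have hle : lamD ≤ PD := by
        rw [le_div_iff₀ hlD] at h
        nlinarith
      have h1 : lamD / PD ≤ 1 := by rw [div_le_one hPD]; exact hle
      rw [hMeq, min_eq_right h1]
      rw [eq_div_iff (by positivity)]
      field_simp
    · have hMeq : M = lamS := max_eq_left h
      have hle : PD ≤ lamD := by
        rw [div_le_iff₀ hlD] at h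
        nlinarith
      have h1 : (1 : ℝ) ≤ lamD / PD := by rw [le_div_iff₀ hPD]; linarith
      rw [hMeq, min_eq_left h1, div_self hlS.ne']
  -- min simplification for P ≥ M
  have hmin_hi : ∀ P : ℝ, M ≤ P → min (min 1 (lamS / P)) (lamD / PD) = lamS / P := by
    intro P hMP
    have hP0 : 0 < P := lt_of_lt_of_le hM0 hMP
    have h1 : lamS / P ≤ 1 := by
      rw [div_le_one hP0]; exact hlSM.trans hMP
    have h2 : lamS / P ≤ lamD / PD := by
      have h3 : lamS * PD / lamD ≤ P := (le_max_right lamS _).trans hMP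
      rw [div_le_iff₀ hlD] at h3
      rw [div_le_div_iff₀ hP0 hPD]
      nlinarith
    rw [min_eq_right h1, min_eq_left h2]
  -- min simplification for P ≤ M
  have hmin_lo : ∀ P : ℝ, 0 < P → P ≤ M →
      min (min 1 (lamS / P)) (lamD / PD) = min 1 (lamD / PD) := by
    intro P hP0 hPM
    have h : lamS / M ≤ lamS / P := by
      apply div_le_div_of_nonneg_left hlS.le hP0 hPM
    have h' : min 1 (lamD / PD) ≤ lamS / P := hm0M ▸ h
    apply le_antisymm
    · exact min_le_min (min_le_left 1 _) (le_refl _)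
    · exact le_min (le_min (min_le_left _ _) h') (min_le_right _ _)
  have hphiPst : phi Pst = u Pst := by
    rw [hphi Pst hPstP, hmin_hi Pst (le_max_left M Bth)]
  constructor
  · exact hPstP
  · intro P hP
    rw [hphiPst]
    rcases le_total P M with hPM | hMP
    · have hMPcs : Pcs < M := lt_of_lt_of_le hP hPM
      rw [hphi P hP, hmin_lo P (hpos P hP) hPM]
      have hm0nn : 0 ≤ min 1 (lamD / PD) := le_min zero_le_one (by positivity)
      have step1 : Real.exp (-c / (P - Pcs)) * min 1 (lamD / PD)
          ≤ Real.exp (-c / (M - Pcs)) * min 1 (lamD / PD) := by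
        apply mul_le_mul_of_nonneg_right _ hm0nn
        apply Real.exp_le_exp.2
        have hd : c / (M - Pcs) ≤ c / (P - Pcs) :=
          div_le_div_of_nonneg_left hc.le (sub_pos.2 hP) (by linarith)
        rw [neg_div, neg_div]
        linarith
      have step2 : Real.exp (-c / (M - Pcs)) * min 1 (lamD / PD) = u M := by
        rw [hm0M]
      have step3 : u M ≤ u Pst := by
        rcases le_total M Bth with h | h
        · rw [hPstdef, max_eq_right h]
          exact humono M Bth hMPcs h (le_refl _)
        · rw [hPstdef, max_eq_left h]
      linarith
    · rw [hphi P hP, hmin_hi P hMP]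
      rcases le_total P Bth with h | h
      · have hPstEq : Pst = Bth := max_eq_right (hMP.trans h)
        rw [hPstEq]
        exact humono P Bth hP h (le_refl _)
      · exact hanti Pst P hPstB (max_le hMP h)
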